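/- There always exists an optimal deterministic policy: there is a deterministic policy μ : S → A such that for every stochastic policy π and every state-action pair (s,a), Q^μ(s,a) ≤ Q^π(s,a); in particular V^μ(s) ≤ V^π(s) for all s ∈ S, where V^π(s) := ∑_{a} (π s a) · Q^π(s,a). -/

import Mathlib

open Finset

/-- The policy Bellman operator `T^π` on action-value functions for a finite
discounted MDP: `(T^π Q)(s,a) = l(s,a) + γ ∑_{s'} P(s'|s,a) ∑_{a'} π(a'|s') Q(s',a')`. -/
noncomputable def Tpol {S A : Type*} [Fintype S] [Fintype A]
    (P : S → A → PMF S) (l : S → A → ℝ) (γ : ℝ) (π : S → PMF A)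
    (Q : S × A → ℝ) : S × A → ℝ :=
  fun sa => l sa.1 sa.2 +
    γ * ∑ s' : S, (P sa.1 sa.2 s').toReal * ∑ a' : A, (π s' a').toReal * Q (s', a')

/-- The state-value function `V^π(s) = ∑_a π(a|s) Q(s,a)` induced by a policy `π`
and an action-value function `Q`. -/
noncomputable def Vof {S A : Type*} [Fintype A] (π : S → PMF A) (Q : S × A → ℝ)
    (s : S) : ℝ :=
  ∑ a : A, (π s a).toReal * Q (s, a)

lemma pmf_sum_toReal {α : Type*} [Fintype α] (p : PMF α) : ∑ a : α, (p a).toReal = 1 := by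
  rw [← ENNReal.toReal_sum (fun a _ => (p.apply_ne_top a)), ← tsum_fintype (L := .unconditional _), p.tsum_coe,
    ENNReal.toReal_one]

lemma abs_inf'_sub_inf'_le' {α : Type*} [Fintype α] [Nonempty α] (f g : α → ℝ) (c : ℝ)
    (h : ∀ a, |f a - g a| ≤ c) :
    |univ.inf' univ_nonempty f - univ.inf' univ_nonempty g| ≤ c := by
  rw [abs_sub_le_iff]
  constructor
  · obtain ⟨a, -, ha⟩ := exists_mem_eq_inf' univ_nonempty g
    calc univ.inf' univ_nonempty f - univ.inf' univ_nonempty g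
        ≤ f a - g a := by rw [ha]; gcongr; exact inf'_le _ (mem_univ a)
      _ ≤ |f a - g a| := le_abs_self _
      _ ≤ c := h a
  · obtain ⟨a, -, ha⟩ := exists_mem_eq_inf' univ_nonempty f
    calc univ.inf' univ_nonempty g - univ.inf' univ_nonempty f
        ≤ g a - f a := by rw [ha]; gcongr; exact inf'_le _ (mem_univ a)
      _ ≤ |f a - g a| := by rw [abs_sub_comm]; exact le_abs_self _
      _ ≤ c := h a

noncomputable def Topt {S A : Type*} [Fintype S] [Fintype A] [Nonempty A]
    (P : S → A → PMF S) (l : S → A → ℝ) (γ : ℝ) (Q : S × A → ℝ) : S × A → ℝ :=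
  fun sa => l sa.1 sa.2 +
    γ * ∑ s' : S, (P sa.1 sa.2 s').toReal * (univ.inf' univ_nonempty fun a' => Q (s', a'))

lemma topt_exists_fixed {S A : Type*} [Fintype S] [Fintype A] [Nonempty S] [Nonempty A]
    (P : S → A → PMF S) (l : S → A → ℝ) (γ : ℝ) (hγ0 : 0 ≤ γ) (hγ1 : γ < 1) :
    ∃ Q : S × A → ℝ, Topt P l γ Q = Q := by
  have hcontr : ContractingWith ⟨γ, hγ0⟩ (Topt P l γ) := by
    refine ⟨by exact_mod_cast hγ1, LipschitzWith.of_dist_le_mul fun Q1 Q2 => ?_⟩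
    have hd : (0:ℝ) ≤ ↑(⟨γ, hγ0⟩ : NNReal) * dist Q1 Q2 := by positivity
    refine (dist_pi_le_iff hd).2 fun sa => ?_
    simp only [Topt, Real.dist_eq, add_sub_add_left_eq_sub, ← mul_sub, ← Finset.sum_sub_distrib,
      abs_mul, abs_of_nonneg hγ0]
    have key : |∑ s' : S, (P sa.1 sa.2 s').toReal * ((univ.inf' univ_nonempty fun a' => Q1 (s', a'))
        - (univ.inf' univ_nonempty fun a' => Q2 (s', a')))| ≤ dist Q1 Q2 := by
      calc _ ≤ ∑ s' : S, |(P sa.1 sa.2 s').toReal * ((univ.inf' univ_nonempty fun a' => Q1 (s', a'))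
            - (univ.inf' univ_nonempty fun a' => Q2 (s', a')))| := Finset.abs_sum_le_sum_abs _ _
        _ ≤ ∑ s' : S, (P sa.1 sa.2 s').toReal * dist Q1 Q2 := by
              refine Finset.sum_le_sum fun s' _ => ?_
              rw [abs_mul, abs_of_nonneg ENNReal.toReal_nonneg]
              refine mul_le_mul_of_nonneg_left ?_ ENNReal.toReal_nonneg
              refine abs_inf'_sub_inf'_le' _ _ _ fun a' => ?_
              have := dist_le_pi_dist Q1 Q2 (s', a')
              rwa [Real.dist_eq] at this
        _ = dist Q1 Q2 := by rw [← Finset.sum_mul, pmf_sum_toReal, one_mul]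
    calc γ * |_| ≤ γ * dist Q1 Q2 := by
          exact mul_le_mul_of_nonneg_left key hγ0
      _ = _ := rfl
  exact ⟨_, hcontr.fixedPoint_isFixedPt⟩

lemma tpol_le {S A : Type*} [Fintype S] [Fintype A] [Nonempty S] [Nonempty A]
    (P : S → A → PMF S) (l : S → A → ℝ) (γ : ℝ) (hγ0 : 0 ≤ γ) (hγ1 : γ < 1)
    (π1 π2 : S → PMF A) (Q1 Q2 : S × A → ℝ)
    (h1 : Tpol P l γ π1 Q1 = Q1) (h2 : Tpol P l γ π2 Q2 = Q2)
    (hg : ∀ s', ∑ a', (π1 s' a').toReal * Q1 (s', a') ≤ ∑ a', (π2 s' a').toReal * Q1 (s', a')) :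
    ∀ sa : S × A, Q1 sa ≤ Q2 sa := by
  set d := (univ : Finset (S × A)).sup' univ_nonempty (fun sa => Q1 sa - Q2 sa) with hd
  have hled : ∀ sa, Q1 sa - Q2 sa ≤ d := fun sa => le_sup' (fun sa => Q1 sa - Q2 sa) (mem_univ sa)
  have hdle : d ≤ γ * d := by
    obtain ⟨sa0, -, hsa0⟩ := exists_mem_eq_sup' (univ_nonempty) (fun sa => Q1 sa - Q2 sa)
    refine (hd.trans hsa0).trans_le ?_
    conv_lhs => rw [← h1, ← h2]
    simp only [Tpol]
    have hrw : ∀ x y : ℝ, l sa0.1 sa0.2 + γ * x - (l sa0.1 sa0.2 + γ * y) = γ * (x - y) := by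
      intro x y; ring
    rw [hrw]
    refine mul_le_mul_of_nonneg_left ?_ hγ0
    rw [← Finset.sum_sub_distrib]
    calc ∑ s' : S, ((P sa0.1 sa0.2 s').toReal * ∑ a' : A, (π1 s' a').toReal * Q1 (s', a')
          - (P sa0.1 sa0.2 s').toReal * ∑ a' : A, (π2 s' a').toReal * Q2 (s', a'))
        ≤ ∑ s' : S, (P sa0.1 sa0.2 s').toReal * d := by
          refine Finset.sum_le_sum fun s' _ => ?_
          rw [← mul_sub]
          refine mul_le_mul_of_nonneg_left ?_ ENNReal.toReal_nonneg
          calc (∑ a' : A, (π1 s' a').toReal * Q1 (s', a'))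
                - ∑ a' : A, (π2 s' a').toReal * Q2 (s', a')
              ≤ (∑ a' : A, (π2 s' a').toReal * Q1 (s', a'))
                - ∑ a' : A, (π2 s' a').toReal * Q2 (s', a') := by
                have := hg s'; linarith
            _ = ∑ a' : A, (π2 s' a').toReal * (Q1 (s', a') - Q2 (s', a')) := by
                rw [← Finset.sum_sub_distrib]; congr 1; ext a'; ring
            _ ≤ ∑ a' : A, (π2 s' a').toReal * d := by
                refine Finset.sum_le_sum fun a' _ => ?_
                exact mul_le_mul_of_nonneg_left (hled _) ENNReal.toReal_nonneg
            _ = d := by rw [← Finset.sum_mul, pmf_sum_toReal, one_mul]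
      _ = d := by rw [← Finset.sum_mul, pmf_sum_toReal, one_mul]
  have hd0 : d ≤ 0 := by nlinarith
  intro sa
  have := hled sa
  linarith

lemma sum_pure_mul {S A : Type*} [Fintype A] [DecidableEq A] (Q : S × A → ℝ) (s : S) (b : A) :
    ∑ a : A, (PMF.pure b a).toReal * Q (s, a) = Q (s, b) := by
  simp only [PMF.pure_apply]
  rw [Finset.sum_eq_single b]
  · simp
  · intro a _ hab; simp [hab]
  · intro h; exact absurd (mem_univ b) h

/-- There always exists an optimal deterministic policy: some `μ : S → A`
(identified with the stochastic policy `s ↦ PMF.pure (μ s)`) satisfies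
`Q^μ(s,a) ≤ Q^π(s,a)` for every stochastic policy `π` and all `(s,a)`; in
particular `V^μ(s) ≤ V^π(s)` for all `s`. -/
theorem exists_optimal_deterministic_policy
    {S A : Type*} [Fintype S] [Fintype A] [Nonempty S] [Nonempty A]
    (P : S → A → PMF S) (l : S → A → ℝ) (γ : ℝ) (hγ0 : 0 ≤ γ) (hγ1 : γ < 1) :
    ∃ μ : S → A, ∀ Qmu : S × A → ℝ,
      Tpol P l γ (fun s => PMF.pure (μ s)) Qmu = Qmu →
      ∀ π : S → PMF A, ∀ Qpi : S × A → ℝ, Tpol P l γ π Qpi = Qpi →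
        (∀ s : S, ∀ a : A, Qmu (s, a) ≤ Qpi (s, a)) ∧
        (∀ s : S, Vof (fun s' => PMF.pure (μ s')) Qmu s ≤ Vof π Qpi s) := by
  classical
  obtain ⟨Qstar, hQstar⟩ := topt_exists_fixed P l γ hγ0 hγ1
  have hargmin : ∀ s : S, ∃ a : A, ∀ a' : A, Qstar (s, a) ≤ Qstar (s, a') := by
    intro s
    obtain ⟨a, -, ha⟩ := Finset.exists_min_image univ (fun a => Qstar (s, a)) univ_nonempty
    exact ⟨a, fun a' => ha a' (mem_univ a')⟩
  choose μ hμ using hargmin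
  have hinf : ∀ s : S, (univ.inf' univ_nonempty fun a' => Qstar (s, a')) = Qstar (s, μ s) :=
    fun s => le_antisymm (inf'_le _ (mem_univ _)) (le_inf' _ _ fun a _ => hμ s a)
  have hfixμ : Tpol P l γ (fun s => PMF.pure (μ s)) Qstar = Qstar := by
    have heq : Tpol P l γ (fun s => PMF.pure (μ s)) Qstar = Topt P l γ Qstar := by
      funext sa
      simp only [Tpol, Topt]
      congr 2
      refine Finset.sum_congr rfl fun s' _ => ?_
      rw [sum_pure_mul, hinf]
    rw [heq, hQstar]
  refine ⟨μ, fun Qmu hQmu π Qpi hQpi => ?_⟩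
  -- Qmu = Qstar by uniqueness of the fixed point of T^μ
  have hQmuStar : Qmu = Qstar := by
    funext sa
    exact le_antisymm
      (tpol_le P l γ hγ0 hγ1 _ _ Qmu Qstar hQmu hfixμ (fun s' => le_refl _) sa)
      (tpol_le P l γ hγ0 hγ1 _ _ Qstar Qmu hfixμ hQmu (fun s' => le_refl _) sa)
  subst hQmuStar
  -- Qstar ≤ Qpi
  have hle : ∀ sa : S × A, Qmu sa ≤ Qpi sa := by
    refine tpol_le P l γ hγ0 hγ1 _ π Qmu Qpi hQmu hQpi fun s' => ?_
    rw [sum_pure_mul]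
    calc Qmu (s', μ s') = ∑ a' : A, (π s' a').toReal * Qmu (s', μ s') := by
          rw [← Finset.sum_mul, pmf_sum_toReal, one_mul]
      _ ≤ ∑ a' : A, (π s' a').toReal * Qmu (s', a') :=
          Finset.sum_le_sum fun a' _ =>
            mul_le_mul_of_nonneg_left (hμ s' a') ENNReal.toReal_nonneg
  refine ⟨fun s a => hle (s, a), fun s => ?_⟩
  unfold Vof
  rw [sum_pure_mul]
  calc Qmu (s, μ s) = ∑ a : A, (π s a).toReal * Qmu (s, μ s) := by
        rw [← Finset.sum_mul, pmf_sum_toReal, one_mul]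
    _ ≤ ∑ a : A, (π s a).toReal * Qpi (s, a) :=
        Finset.sum_le_sum fun a _ =>
          mul_le_mul_of_nonneg_left ((hμ s a).trans (hle (s, a))) ENNReal.toReal_nonneg
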